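/- Let I be a set and let F be a closed subset of [0,1]^I with F ⊆ B₁⁺(I). Then there exist a closed subset Z of the product space ∏_{n∈ℕ} σ_{2^{n+1}}(I) and a continuous surjection g : Z → F; explicitly, one may take Z to be the preimage of F under the map (x^n)_{n∈ℕ} ↦ (∑_{n∈ℕ} x^n_i / 2^{n+1})_{i∈I}, and g the restriction of this map to Z. -/
import Mathlib


open Set Topology

/-- `σ_n(I) = {x ∈ {0,1}^I : |supp(x)| ≤ n}` (identifying `{0,1}` with `Bool`,
`supp(x) = {i : x i = true}`), as a subset of `I → Bool` with the product topology. -/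
def sigmaSet (I : Type*) (n : ℕ) : Set (I → Bool) := {x | {i | x i = true}.encard ≤ n}

/-- `B₁⁺(I) = {x ∈ [0,1]^I : (x_i) summable and ∑ x_i ≤ 1}`. -/
def B1plus (I : Type*) : Set (I → ℝ) :=
  {x | (∀ i, x i ∈ Set.Icc (0 : ℝ) 1) ∧ Summable x ∧ ∑' i, x i ≤ 1}

private lemma bound_aux (c : Bool) (n : ℕ) :
    (if c then (1 : ℝ) else 0) / 2 ^ (n + 1) ≤ (1 / 2 : ℝ) ^ n := by
  rw [div_pow, one_pow]
  have h0 : (0 : ℝ) ≤ (if c then (1 : ℝ) else 0) := by cases c <;> norm_num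
  have h1 : (if c then (1 : ℝ) else 0) ≤ 1 := by cases c <;> norm_num
  have h2 : (2 : ℝ) ^ n ≤ 2 ^ (n + 1) := by
    apply pow_le_pow_right₀ (by norm_num) (Nat.le_succ n)
  have hp : (0 : ℝ) < 2 ^ n := by positivity
  have hp1 : (0 : ℝ) < 2 ^ (n + 1) := by positivity
  rw [div_le_div_iff₀ hp1 hp]
  nlinarith

private lemma floor_two_mul_cases (x : ℝ) :
    ⌊2 * x⌋ = 2 * ⌊x⌋ ∨ ⌊2 * x⌋ = 2 * ⌊x⌋ + 1 := by
  have h1 : 2 * ⌊x⌋ ≤ ⌊2 * x⌋ := by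
    apply Int.le_floor.2
    push_cast
    linarith [Int.floor_le x]
  have h2 : ⌊2 * x⌋ < 2 * ⌊x⌋ + 2 := by
    apply Int.floor_lt.2
    push_cast
    linarith [Int.lt_floor_add_one x]
  omega

/-- Binary expansion of a real number in `[0,1]`. -/
private lemma exists_digits (r : ℝ) (hr : r ∈ Set.Icc (0 : ℝ) 1) :
    ∃ b : ℕ → Bool, HasSum (fun n => (if b n then (1 : ℝ) else 0) / 2 ^ (n + 1)) r := by
  rcases eq_or_lt_of_le hr.2 with h1 | h1
  · refine ⟨fun _ => true, ?_⟩
    have := hasSum_geometric_two' 1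
    simp only [if_true, h1]
    convert this using 2 with n
    rw [pow_succ]
    ring
  · -- r < 1
    set b : ℕ → Bool := fun n => decide (⌊r * 2 ^ (n + 1)⌋ = 2 * ⌊r * 2 ^ n⌋ + 1) with hbdef
    have hcases : ∀ n : ℕ, ⌊r * 2 ^ (n + 1)⌋ = 2 * ⌊r * 2 ^ n⌋ ∨
        ⌊r * 2 ^ (n + 1)⌋ = 2 * ⌊r * 2 ^ n⌋ + 1 := by
      intro n
      have := floor_two_mul_cases (r * 2 ^ n)
      rw [show 2 * (r * 2 ^ n) = r * 2 ^ (n + 1) by ring] at this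
      exact this
    have hval : ∀ n : ℕ, (if b n then (1 : ℝ) else 0) =
        (⌊r * 2 ^ (n + 1)⌋ : ℝ) - 2 * (⌊r * 2 ^ n⌋ : ℝ) := by
      intro n
      rcases hcases n with h | h
      · have hb' : b n = false := by
          simp only [hbdef, decide_eq_false_iff_not]
          omega
        rw [hb', if_neg (by simp), h]
        push_cast
        ring
      · have hb' : b n = true := by
          simp only [hbdef, decide_eq_true_eq]
          exact h
        rw [hb', if_pos rfl, h]
        push_cast
        ring
    refine ⟨b, ?_⟩
    have hnonneg : ∀ n : ℕ, 0 ≤ (if b n then (1 : ℝ) else 0) / 2 ^ (n + 1) := by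
      intro n; positivity
    rw [hasSum_iff_tendsto_nat_of_nonneg hnonneg]
    have hsum : ∀ n : ℕ, ∑ k ∈ Finset.range n, (if b k then (1 : ℝ) else 0) / 2 ^ (k + 1)
        = (⌊r * 2 ^ n⌋ : ℝ) / 2 ^ n := by
      intro n
      have := Finset.sum_range_sub (f := fun k => (⌊r * 2 ^ k⌋ : ℝ) / 2 ^ k) n
      have hfl0 : ⌊r * 2 ^ 0⌋ = 0 := by
        rw [Int.floor_eq_zero_iff]
        constructor <;> simp <;> [exact hr.1; linarith]
      rw [hfl0] at this
      simp only [Int.cast_zero, pow_zero, zero_div, sub_zero] at this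
      rw [← this]
      apply Finset.sum_congr rfl
      intro k _
      rw [hval k]
      have h2 : (2 : ℝ) ^ (k + 1) = 2 * 2 ^ k := by rw [pow_succ]; ring
      field_simp
      ring
    simp only [hsum]
    have hle : ∀ n : ℕ, (⌊r * 2 ^ n⌋ : ℝ) / 2 ^ n ≤ r := by
      intro n
      rw [div_le_iff₀ (by positivity)]
      exact Int.floor_le _
    have hge : ∀ n : ℕ, r - (1 / 2) ^ n ≤ (⌊r * 2 ^ n⌋ : ℝ) / 2 ^ n := by
      intro n
      rw [le_div_iff₀ (by positivity : (0:ℝ) < 2 ^ n)]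
      have := Int.lt_floor_add_one (r * 2 ^ n)
      have hp : (0:ℝ) < 2 ^ n := by positivity
      have : (1/2:ℝ) ^ n * 2 ^ n = 1 := by
        rw [← mul_pow]; norm_num
      nlinarith [Int.lt_floor_add_one (r * 2 ^ n)]
    have htl : Filter.Tendsto (fun n : ℕ => r - (1 / 2 : ℝ) ^ n) Filter.atTop (nhds r) := by
      have := tendsto_pow_atTop_nhds_zero_of_lt_one (by norm_num : (0:ℝ) ≤ 1/2)
        (by norm_num : (1/2:ℝ) < 1)
      simpa using Filter.Tendsto.const_sub r this
    exact tendsto_of_tendsto_of_tendsto_of_le_of_le htl tendsto_const_nhds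
      (fun n => hge n) (fun n => hle n)

/-- Dyadic representation of a closed `F ⊆ [0,1]^I` with `F ⊆ B₁⁺(I)`: with
`G((xⁿ)ₙ)ᵢ = ∑ₙ xⁿᵢ/2^{n+1}` and `Z = G⁻¹(F)`, the set `Z` is a closed subset of
`∏_n σ_{2^{n+1}}(I)` and `G` restricts to a continuous surjection `Z → F`. -/
theorem dyadic_representation_B1plus (I : Type*) (F : Set (I → ℝ))
    (hFcl : IsClosed F) (hFcube : ∀ x ∈ F, ∀ i, x i ∈ Set.Icc (0 : ℝ) 1)
    (hFB : F ⊆ B1plus I) :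
    let G : (ℕ → I → Bool) → (I → ℝ) :=
      fun x i => ∑' n : ℕ, (if x n i then (1 : ℝ) else 0) / 2 ^ (n + 1)
    let Z : Set (ℕ → I → Bool) := G ⁻¹' F
    (∀ x ∈ Z, ∀ n : ℕ, x n ∈ sigmaSet I (2 ^ (n + 1))) ∧
      IsClosed Z ∧ Continuous G ∧ G '' Z = F := by
  intro G Z
  have hterm : ∀ (x : ℕ → I → Bool) (i : I),
      Summable (fun n : ℕ => (if x n i then (1 : ℝ) else 0) / 2 ^ (n + 1)) := by
    intro x i
    exact Summable.of_nonneg_of_le (fun n => by positivity)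
      (fun n => bound_aux (x n i) n) summable_geometric_two
  have hG : Continuous G := by
    apply continuous_pi
    intro i
    apply continuous_tsum (u := fun n : ℕ => (1 / 2 : ℝ) ^ n)
    · intro n
      exact (continuous_of_discreteTopology
        (f := fun b : Bool => (if b then (1 : ℝ) else 0) / 2 ^ (n + 1))).comp
        ((continuous_apply i).comp (continuous_apply n))
    · exact summable_geometric_two
    · intro n x
      rw [Real.norm_eq_abs, abs_of_nonneg (by positivity)]
      exact bound_aux (x n i) n
  have hmem : ∀ x ∈ Z, ∀ n : ℕ, x n ∈ sigmaSet I (2 ^ (n + 1)) := by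
    intro x hx n
    obtain ⟨hc, hs, ht⟩ := hFB hx
    by_contra hcon
    rw [sigmaSet, mem_setOf_eq, not_le] at hcon
    have hle : ((2 ^ (n + 1) + 1 : ℕ) : ℕ∞) ≤ {i | x n i = true}.encard := by
      push_cast
      exact Order.add_one_le_of_lt hcon
    obtain ⟨t, hts, htc⟩ := Set.exists_subset_encard_eq hle
    have htfin : t.Finite := Set.finite_of_encard_eq_coe htc
    have hcard : htfin.toFinset.card = 2 ^ (n + 1) + 1 := by
      have := htfin.encard_eq_coe_toFinset_card
      rw [htc] at this
      exact_mod_cast this.symm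
    -- each element of t contributes at least 1/2^(n+1)
    have hlow : ∀ i ∈ htfin.toFinset, (1 : ℝ) / 2 ^ (n + 1) ≤ G x i := by
      intro i hi
      have hxi : x n i = true := hts (htfin.mem_toFinset.1 hi)
      have := Summable.le_tsum (hterm x i) n (fun m _ => by positivity)
      rw [hxi] at this
      simpa using this
    have hsumle : ∑ i ∈ htfin.toFinset, G x i ≤ 1 := by
      refine le_trans (Summable.sum_le_tsum htfin.toFinset (fun i _ => (hc i).1) hs) ht
    have : ((2 ^ (n + 1) + 1 : ℕ) : ℝ) * (1 / 2 ^ (n + 1)) ≤ 1 := by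
      calc ((2 ^ (n + 1) + 1 : ℕ) : ℝ) * (1 / 2 ^ (n + 1))
          = ∑ _i ∈ htfin.toFinset, (1 : ℝ) / 2 ^ (n + 1) := by
            rw [Finset.sum_const, hcard, nsmul_eq_mul]
        _ ≤ ∑ i ∈ htfin.toFinset, G x i := Finset.sum_le_sum hlow
        _ ≤ 1 := hsumle
    have hp : (0:ℝ) < 2 ^ (n + 1) := by positivity
    rw [mul_div_assoc', mul_one, div_le_one hp] at this
    push_cast at this
    linarith
  refine ⟨hmem, hFcl.preimage hG, hG, ?_⟩
  apply Set.Subset.antisymm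
  · rintro _ ⟨x, hx, rfl⟩
    exact hx
  · intro y hy
    choose b hb using fun i => exists_digits (y i) (hFcube y hy i)
    have hGy : G (fun n i => b i n) = y := funext fun i => (hb i).tsum_eq
    refine ⟨fun n i => b i n, ?_, hGy⟩
    show G (fun n i => b i n) ∈ F
    rw [hGy]; exact hy
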